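/- Fix L > 0. If 0 ≤ a < b ≤ L, then ρ(s, b) < ρ(s, a) for every s ∈ (0, L]. -/

import Mathlib

/-- `β(s) = (√L − √s)/(√L + √s)`. -/
noncomputable def momBeta (L s : ℝ) : ℝ :=
  (Real.sqrt L - Real.sqrt s) / (Real.sqrt L + Real.sqrt s)

/-- The complex square root of a real number: `√x` if `x ≥ 0`, `i√(−x)` otherwise. -/
noncomputable def csqrt (x : ℝ) : ℂ :=
  if 0 ≤ x then ((Real.sqrt x : ℝ) : ℂ) else Complex.I * ((Real.sqrt (-x) : ℝ) : ℂ)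

/-- The discriminant `((1+β(s))²/4)(1 − ℓ/L)² − β(s)(1 − ℓ/L)`. -/
noncomputable def discr (L s ℓ : ℝ) : ℝ :=
  ((1 + momBeta L s) / 2) ^ 2 * (1 - ℓ / L) ^ 2 - momBeta L s * (1 - ℓ / L)

/-- The eigenvalue `((1+β(s))/2)(1 − ℓ/L) + sqrt(discriminant)` of `G(s, ℓ)`. -/
noncomputable def eigP (L s ℓ : ℝ) : ℂ :=
  (((1 + momBeta L s) / 2 * (1 - ℓ / L) : ℝ) : ℂ) + csqrt (discr L s ℓ)

/-- The eigenvalue `((1+β(s))/2)(1 − ℓ/L) − sqrt(discriminant)` of `G(s, ℓ)`. -/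
noncomputable def eigM (L s ℓ : ℝ) : ℂ :=
  (((1 + momBeta L s) / 2 * (1 - ℓ / L) : ℝ) : ℂ) - csqrt (discr L s ℓ)

/-- `ρ(s, ℓ)`: the maximum modulus of the two eigenvalues of `G(s, ℓ)`. -/
noncomputable def specRho (L s ℓ : ℝ) : ℝ :=
  max ‖eigP L s ℓ‖ ‖eigM L s ℓ‖

lemma momBeta_nonneg {L s : ℝ} (hs : 0 < s) (hsL : s ≤ L) : 0 ≤ momBeta L s := by
  have h1 : Real.sqrt s ≤ Real.sqrt L := Real.sqrt_le_sqrt hsL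
  have h2 : 0 < Real.sqrt s := Real.sqrt_pos.2 hs
  exact div_nonneg (by linarith) (by linarith [Real.sqrt_nonneg L])

lemma specRho_of_nonneg {L s ℓ : ℝ} (hx : 0 ≤ (1 + momBeta L s) / 2 * (1 - ℓ / L))
    (hD : 0 ≤ discr L s ℓ) :
    specRho L s ℓ = (1 + momBeta L s) / 2 * (1 - ℓ / L) + Real.sqrt (discr L s ℓ) := by
  have h1 : csqrt (discr L s ℓ) = ((Real.sqrt (discr L s ℓ) : ℝ) : ℂ) := if_pos hD
  have hs : 0 ≤ Real.sqrt (discr L s ℓ) := Real.sqrt_nonneg _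
  simp only [specRho, eigP, eigM, h1, ← Complex.ofReal_add, ← Complex.ofReal_sub,
    Complex.norm_real, Real.norm_eq_abs]
  rw [abs_of_nonneg (by linarith), max_eq_left]
  exact (abs_le.2 ⟨by linarith, by linarith⟩)

lemma specRho_of_neg {L s ℓ : ℝ} (hD : discr L s ℓ < 0) :
    specRho L s ℓ = Real.sqrt (momBeta L s * (1 - ℓ / L)) := by
  have h1 : csqrt (discr L s ℓ) = Complex.I * ((Real.sqrt (-(discr L s ℓ)) : ℝ) : ℂ) :=
    if_neg (not_le.2 hD)
  have hd2 : Real.sqrt (-(discr L s ℓ)) ^ 2 = -(discr L s ℓ) :=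
    Real.sq_sqrt (by linarith)
  have key : ((1 + momBeta L s) / 2 * (1 - ℓ / L)) ^ 2
      + Real.sqrt (-(discr L s ℓ)) ^ 2 = momBeta L s * (1 - ℓ / L) := by
    rw [hd2, discr]; ring
  have hP : ‖eigP L s ℓ‖ = Real.sqrt (momBeta L s * (1 - ℓ / L)) := by
    rw [eigP, h1, mul_comm Complex.I, Complex.norm_add_mul_I, key]
  have hM : ‖eigM L s ℓ‖ = Real.sqrt (momBeta L s * (1 - ℓ / L)) := by
    have : eigM L s ℓ = (((1 + momBeta L s) / 2 * (1 - ℓ / L) : ℝ) : ℂ)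
        + ((-Real.sqrt (-(discr L s ℓ)) : ℝ) : ℂ) * Complex.I := by
      rw [eigM, h1]; push_cast; ring
    rw [this, Complex.norm_add_mul_I, neg_sq, key]
  rw [specRho, hP, hM, max_self]

set_option maxHeartbeats 1600000 in
/-- (Lemma `la:lem:top-rho`.) `ρ(s, ·)` is strictly
decreasing: if `0 ≤ a < b ≤ L`, then `ρ(s, b) < ρ(s, a)` for all `s ∈ (0, L]`. -/
theorem stmt11 {L a b : ℝ} (hL : 0 < L) (ha : 0 ≤ a) (hab : a < b) (hbL : b ≤ L) :
    ∀ s : ℝ, 0 < s → s ≤ L → specRho L s b < specRho L s a := by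
  intro s hs hsL
  have hβ : 0 ≤ momBeta L s := momBeta_nonneg hs hsL
  have hxb : 0 ≤ 1 - b / L := by
    rw [sub_nonneg]; exact (div_le_one hL).2 hbL
  have hxx : 1 - b / L < 1 - a / L := by
    have : a / L < b / L := (div_lt_div_iff_of_pos_right hL).2 hab
    linarith
  have hxa : 0 < 1 - a / L := lt_of_le_of_lt hxb hxx
  have hc : (0:ℝ) < (1 + momBeta L s) / 2 := by linarith
  have ea : discr L s a
      = ((1 + momBeta L s) / 2) ^ 2 * (1 - a / L) ^ 2 - momBeta L s * (1 - a / L) := rfl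
  have eb : discr L s b
      = ((1 + momBeta L s) / 2) ^ 2 * (1 - b / L) ^ 2 - momBeta L s * (1 - b / L) := rfl
  have hxBc : 0 ≤ (1 + momBeta L s) / 2 * (1 - b / L) := mul_nonneg hc.le hxb
  have hxAc : 0 ≤ (1 + momBeta L s) / 2 * (1 - a / L) := mul_nonneg hc.le hxa.le
  rcases lt_or_ge (discr L s a) 0 with hDa | hDa <;>
    rcases lt_or_ge (discr L s b) 0 with hDb | hDb
  · -- both discriminants negative
    rw [specRho_of_neg hDb, specRho_of_neg hDa]
    rw [ea] at hDa
    have hb0 : 0 < momBeta L s := by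
      nlinarith [sq_nonneg ((1 + momBeta L s) / 2 * (1 - a / L))]
    exact Real.sqrt_lt_sqrt (mul_nonneg hβ hxb) (by nlinarith)
  · -- Da < 0, Db ≥ 0
    rw [specRho_of_nonneg hxBc hDb, specRho_of_neg hDa]
    rw [ea] at hDa
    have hb0 : 0 < momBeta L s := by
      nlinarith [sq_nonneg ((1 + momBeta L s) / 2 * (1 - a / L))]
    rcases eq_or_lt_of_le hxb with h0 | h0
    · have hdb0 : discr L s b = 0 := by rw [eb, ← h0]; ring
      have hcb0 : (1 + momBeta L s) / 2 * (1 - b / L) = 0 := by rw [← h0]; ring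
      rw [hdb0, hcb0, Real.sqrt_zero, add_zero]
      exact Real.sqrt_pos.2 (mul_pos hb0 hxa)
    · exfalso
      rw [eb] at hDb
      nlinarith [mul_nonneg hxa.le hDb, mul_pos h0 (by linarith :
          (0:ℝ) < momBeta L s * (1 - a / L)
            - ((1 + momBeta L s) / 2) ^ 2 * (1 - a / L) ^ 2),
        mul_pos (mul_pos (mul_pos (by positivity : (0:ℝ) < ((1 + momBeta L s) / 2) ^ 2)
          hxa) h0) (by linarith : (0:ℝ) < (1 - a / L) - (1 - b / L))]
  · -- Da ≥ 0, Db < 0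
    rw [specRho_of_neg hDb, specRho_of_nonneg hxAc hDa]
    rw [ea] at hDa
    rw [eb] at hDb
    have hb0 : 0 < momBeta L s := by
      nlinarith [sq_nonneg ((1 + momBeta L s) / 2 * (1 - b / L))]
    have h1 : Real.sqrt (momBeta L s * (1 - b / L))
        < (1 + momBeta L s) / 2 * (1 - a / L) := by
      rw [show (1 + momBeta L s) / 2 * (1 - a / L)
          = Real.sqrt (((1 + momBeta L s) / 2 * (1 - a / L)) ^ 2) from
        (Real.sqrt_sq (mul_nonneg hc.le hxa.le)).symm]
      apply Real.sqrt_lt_sqrt (mul_nonneg hβ hxb)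
      nlinarith [mul_pos hb0 (by linarith : (0:ℝ) < (1 - a / L) - (1 - b / L))]
    linarith [Real.sqrt_nonneg (discr L s a)]
  · -- both nonneg
    rw [specRho_of_nonneg hxAc hDa, specRho_of_nonneg hxBc hDb]
    apply add_lt_add_of_lt_of_le (mul_lt_mul_of_pos_left hxx hc)
    apply Real.sqrt_le_sqrt
    rw [ea, eb]
    rw [ea] at hDa; rw [eb] at hDb
    nlinarith [mul_nonneg (by linarith : (0:ℝ) ≤ (1 - a / L) - (1 - b / L)) hDa,
      mul_nonneg (mul_nonneg (mul_nonneg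
        (by linarith : (0:ℝ) ≤ (1 - a / L) - (1 - b / L))
        (by positivity : (0:ℝ) ≤ ((1 + momBeta L s) / 2) ^ 2)) hxa.le) hxb,
      mul_pos hxa (by linarith : (0:ℝ) < (1:ℝ))]
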